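/- (Loehr–Warrington mid formula) Let D be a Young diagram fitting below the diagonal of R_{P,Q} (P = Kp, Q = Kq, p,q coprime positive, K positive). Then mid_{q/p}(D) := |{c \in D : p·l(c) < q·(a(c)+1) and q·a(c) < p·(l(c)+1)}| = |R^+_{P,Q}| - \sum_{v \leq w} |W_{in}(v)|·|N_{in}(w)|, where R^+_{P,Q} = {(x,y) \in (Z_{\geq 0})^2 : qx + py \leq Kpq - p - q}, the sum is over pairs of integer vertex labels v \leq w, W_{in}(v) is the set of westward boundary edges ending at a vertex labeled v, and N_{in}(w) the set of northward boundary edges ending at a vertex labeled w. -/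

import Mathlib

/-- A Young diagram: a finite down-closed subset of ℕ². -/
def IsYoung (D : Finset (ℕ × ℕ)) : Prop :=
  ∀ x y x' y', (x, y) ∈ D → x' ≤ x → y' ≤ y → (x', y') ∈ D

/-- Arm length of a box inside the diagram. -/
def arm (D : Finset (ℕ × ℕ)) (c : ℕ × ℕ) : ℕ :=
  (D.filter fun d => d.2 = c.2 ∧ c.1 < d.1).card

/-- Leg length of a box inside the diagram. -/
def leg (D : Finset (ℕ × ℕ)) (c : ℕ × ℕ) : ℕ :=
  (D.filter fun d => d.1 = c.1 ∧ c.2 < d.2).card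

/-- Arm length of a box in the complement of the diagram. -/
def coArm (D : Finset (ℕ × ℕ)) (c : ℕ × ℕ) : ℕ :=
  ((Finset.range c.1).filter fun x' => (x', c.2) ∉ D).card

/-- Leg length of a box in the complement of the diagram. -/
def coLeg (D : Finset (ℕ × ℕ)) (c : ℕ × ℕ) : ℕ :=
  ((Finset.range c.2).filter fun y' => (c.1, y') ∉ D).card

/-- Length of column x of the diagram. -/
def colLen (D : Finset (ℕ × ℕ)) (x : ℕ) : ℕ := (D.filter fun c => c.1 = x).card

/-- Length of row y of the diagram. -/
def rowLen (D : Finset (ℕ × ℕ)) (y : ℕ) : ℕ := (D.filter fun c => c.2 = y).card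

/-- Label of the endpoint of the westward boundary edge in column x.
The boundary path starts at the southeast corner (P,0) with label 0, each
westward step adds q and each northward step subtracts p; the westward edge in
column x ends at the point (x, colLen D x). -/
def wlabel (D : Finset (ℕ × ℕ)) (p q P : ℕ) (x : ℕ) : ℤ :=
  ((P : ℤ) - x) * q - (colLen D x : ℤ) * p

/-- Label of the endpoint of the northward boundary edge in row y: it ends at
the point (rowLen D y, y+1). -/
def nlabel (D : Finset (ℕ × ℕ)) (p q P : ℕ) (y : ℕ) : ℤ :=
  ((P : ℤ) - rowLen D y) * q - ((y : ℤ) + 1) * p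

/-- Number of westward boundary edges entering a vertex labeled v. -/
def Win (D : Finset (ℕ × ℕ)) (p q P : ℕ) (v : ℤ) : ℕ :=
  ((Finset.range P).filter fun x => wlabel D p q P x = v).card

/-- Number of northward boundary edges entering a vertex labeled v. -/
def Nin (D : Finset (ℕ × ℕ)) (p q P Q : ℕ) (v : ℤ) : ℕ :=
  ((Finset.range Q).filter fun y => nlabel D p q P y = v).card

/-- The set of labels of vertices of the boundary graph M(D). -/
def labels (D : Finset (ℕ × ℕ)) (p q P Q : ℕ) : Finset ℤ :=
  ((Finset.range P).image (wlabel D p q P)) ∪ ((Finset.range Q).image (nlabel D p q P))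

namespace LW

lemma downclosed_range (T : Finset ℕ) (h : ∀ a ∈ T, ∀ b, b ≤ a → b ∈ T) :
    T = Finset.range T.card := by
  ext b
  simp only [Finset.mem_range]
  constructor
  · intro hb
    by_contra hlt
    push_neg at hlt
    have hsub : Finset.range (b + 1) ⊆ T := by
      intro i hi
      exact h b hb i (by simp only [Finset.mem_range] at hi; omega)
    have := Finset.card_le_card hsub
    simp only [Finset.card_range] at this; omega
  · intro hb
    by_contra hbT
    have hsub : T ⊆ Finset.range b := by
      intro a ha
      simp only [Finset.mem_range]
      by_contra hge
      exact hbT (h a ha b (by omega))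
    have := Finset.card_le_card hsub
    simp only [Finset.card_range] at this; omega

lemma mem_iff_col {D : Finset (ℕ × ℕ)} (hD : IsYoung D) (x y : ℕ) :
    (x, y) ∈ D ↔ y < colLen D x := by
  classical
  set T : Finset ℕ := (D.filter fun c => c.1 = x).image Prod.snd with hT
  have hcard : T.card = colLen D x := by
    rw [hT, colLen]
    apply Finset.card_image_of_injOn
    intro a ha b hb hab
    simp only [Finset.mem_coe, Finset.mem_filter] at ha hb
    exact Prod.ext (ha.2.trans hb.2.symm) hab
  have hmem : ∀ y', y' ∈ T ↔ (x, y') ∈ D := by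
    intro y'
    rw [hT]
    simp only [Finset.mem_image, Finset.mem_filter]
    constructor
    · rintro ⟨⟨a, b⟩, ⟨hab, rfl⟩, rfl⟩; exact hab
    · intro hxy; exact ⟨(x, y'), ⟨hxy, rfl⟩, rfl⟩
  have hdc : ∀ a ∈ T, ∀ b, b ≤ a → b ∈ T := by
    intro a ha b hba
    rw [hmem] at ha ⊢
    exact hD x a x b ha le_rfl hba
  rw [← hmem, downclosed_range T hdc, hcard, Finset.mem_range]

lemma mem_iff_row {D : Finset (ℕ × ℕ)} (hD : IsYoung D) (x y : ℕ) :
    (x, y) ∈ D ↔ x < rowLen D y := by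
  classical
  set T : Finset ℕ := (D.filter fun c => c.2 = y).image Prod.fst with hT
  have hcard : T.card = rowLen D y := by
    rw [hT, rowLen]
    apply Finset.card_image_of_injOn
    intro a ha b hb hab
    simp only [Finset.mem_coe, Finset.mem_filter] at ha hb
    exact Prod.ext hab (ha.2.trans hb.2.symm)
  have hmem : ∀ x', x' ∈ T ↔ (x', y) ∈ D := by
    intro x'
    rw [hT]
    simp only [Finset.mem_image, Finset.mem_filter]
    constructor
    · rintro ⟨⟨a, b⟩, ⟨hab, rfl⟩, rfl⟩; exact hab
    · intro hxy; exact ⟨(x', y), ⟨hxy, rfl⟩, rfl⟩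
  have hdc : ∀ a ∈ T, ∀ b, b ≤ a → b ∈ T := by
    intro a ha b hba
    rw [hmem] at ha ⊢
    exact hD a y b y ha hba le_rfl
  rw [← hmem, downclosed_range T hdc, hcard, Finset.mem_range]

end LW

namespace LW2
open LW

variable (D : Finset (ℕ × ℕ)) (p q K : ℕ)

/-- F value: q x + p colLen x. -/
def Fx (x : ℕ) : ℤ := q * x + p * colLen D x
/-- G value: q rowLen y + p (y+1). -/
def Gy (y : ℕ) : ℤ := q * rowLen D y + p * (y + 1)

lemma cell_lt (hq : 0 < q) (hp : 0 < p)
    (hdiag : ∀ c ∈ D, q * c.1 + p * c.2 + p + q ≤ K * p * q)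
    {c : ℕ × ℕ} (hc : c ∈ D) : c.1 < K * p ∧ c.2 < K * q := by
  have h := hdiag c hc
  constructor
  · have h1 : q * (c.1 + 1) ≤ q * (K * p) := by nlinarith
    have := Nat.le_of_mul_le_mul_left h1 hq
    omega
  · have h1 : p * (c.2 + 1) ≤ p * (K * q) := by nlinarith
    have := Nat.le_of_mul_le_mul_left h1 hp
    omega

lemma colLen_P (hD : IsYoung D) (hq : 0 < q) (hp : 0 < p)
    (hdiag : ∀ c ∈ D, q * c.1 + p * c.2 + p + q ≤ K * p * q) :
    colLen D (K * p) = 0 := by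
  by_contra h
  have h0 : (K * p, 0) ∈ D := (mem_iff_col hD _ _).2 (by omega)
  exact absurd (cell_lt D p q K hq hp hdiag h0).1 (by simp)

lemma colLen_anti (hD : IsYoung D) {a b : ℕ} (hab : a ≤ b) :
    colLen D b ≤ colLen D a := by
  by_contra h
  have h1 : (b, colLen D a) ∈ D := (mem_iff_col hD _ _).2 (by omega)
  have h2 : (a, colLen D a) ∈ D := hD b (colLen D a) a (colLen D a) h1 hab le_rfl
  have := (mem_iff_col hD a (colLen D a)).1 h2
  omega

lemma strip_row (hD : IsYoung D) {a y : ℕ} (h1 : colLen D (a+1) ≤ y)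
    (h2 : y < colLen D a) : rowLen D y = a + 1 := by
  have hm : (a, y) ∈ D := (mem_iff_col hD _ _).2 h2
  have hlow := (mem_iff_row hD a y).1 hm
  have hnot : (a+1, y) ∉ D := fun hc => absurd ((mem_iff_col hD _ _).1 hc) (by omega)
  have hup : ¬ (a + 1 < rowLen D y) := fun hc => hnot ((mem_iff_row hD _ _).2 hc)
  omega

/-- AP count lemma. -/
lemma AP (hp : 0 < p) (u τ : ℤ) {c1 c0 : ℕ} (h : c1 ≤ c0) :
    (∑ y ∈ Finset.Ico c1 c0,
        if τ < u + p * (y + 1) ∧ u + p * (y + 1) ≤ τ + p then (1:ℤ) else 0)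
      = (if u + p * c1 ≤ τ then 1 else 0) - (if u + p * c0 ≤ τ then 1 else 0) := by
  induction c0, h using Nat.le_induction with
  | base => simp
  | succ n hn ih =>
    rw [Finset.sum_Ico_succ_top hn, ih]
    have hpz : (0:ℤ) < p := by exact_mod_cast hp
    have hpn : (p:ℤ) * ((n:ℤ) + 1) = (p:ℤ) * (n:ℤ) + p := by ring
    push_cast
    split_ifs <;> push_cast at * <;> omega

/-- Crossing identity along the boundary path, from column a to the start. -/
lemma path (hD : IsYoung D) (hq : 0 < q) (hp : 0 < p)
    (hdiag : ∀ c ∈ D, q * c.1 + p * c.2 + p + q ≤ K * p * q) (τ : ℤ) :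
    ∀ k a, a + k = K * p →
    (∑ x ∈ Finset.Ico a (K * p),
        if τ - q < Fx D p q x ∧ Fx D p q x ≤ τ then (1:ℤ) else 0)
      - (∑ y ∈ Finset.range (colLen D a),
          if τ < Gy D p q y ∧ Gy D p q y ≤ τ + p then (1:ℤ) else 0)
      = (if τ < (K*p*q : ℤ) then 1 else 0) - (if τ < Fx D p q a then 1 else 0) := by
  intro k
  induction k with
  | zero =>
    intro a ha
    subst_vars
    rw [Finset.Ico_self, colLen_P D p q K hD hq hp hdiag]
    simp only [Fx, colLen_P D p q K hD hq hp hdiag, Finset.sum_empty, Finset.range_zero,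
      Nat.cast_zero, mul_zero, add_zero]
    have heq : (q:ℤ) * ((K:ℤ) * (p:ℤ)) = (K:ℤ) * (p:ℤ) * (q:ℤ) := by ring
    push_cast
    split_ifs <;> omega
  | succ n ih =>
    intro a ha
    have haP : a < K * p := by omega
    have hIH := ih (a + 1) (by omega)
    rw [Finset.sum_eq_sum_Ico_succ_bot haP]
    have hsplit : (∑ y ∈ Finset.range (colLen D a),
          if τ < Gy D p q y ∧ Gy D p q y ≤ τ + p then (1:ℤ) else 0)
        = (∑ y ∈ Finset.range (colLen D (a+1)),
            if τ < Gy D p q y ∧ Gy D p q y ≤ τ + p then (1:ℤ) else 0)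
          + (∑ y ∈ Finset.Ico (colLen D (a+1)) (colLen D a),
              if τ < Gy D p q y ∧ Gy D p q y ≤ τ + p then (1:ℤ) else 0) := by
      simp only [Finset.range_eq_Ico]
      exact (Finset.sum_Ico_consecutive _ (Nat.zero_le _)
        (colLen_anti D hD (by omega))).symm
    have hstrip : (∑ y ∈ Finset.Ico (colLen D (a+1)) (colLen D a),
          if τ < Gy D p q y ∧ Gy D p q y ≤ τ + p then (1:ℤ) else 0)
        = (∑ y ∈ Finset.Ico (colLen D (a+1)) (colLen D a),
            if τ < (q*(a+1) : ℤ) + p * (y + 1) ∧ (q*(a+1) : ℤ) + p * (y + 1) ≤ τ + p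
            then (1:ℤ) else 0) := by
      apply Finset.sum_congr rfl
      intro y hy
      simp only [Finset.mem_Ico] at hy
      rw [Gy, strip_row D hD hy.1 hy.2]
      push_cast; ring_nf
    rw [hsplit, hstrip, AP p (by exact hp) _ τ (colLen_anti D hD (by omega))]
    have e1 : (q*(a+1) : ℤ) + p * (colLen D (a+1)) = Fx D p q (a+1) := by
      rw [Fx]; push_cast; ring
    have e2 : (q*(a+1) : ℤ) + p * (colLen D a) = Fx D p q a + q := by
      rw [Fx]; push_cast; ring
    rw [e1, e2]
    have hfin : ∀ A B C : ℤ,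
        ((if τ - q < B ∧ B ≤ τ then (1:ℤ) else 0) + A)
          - (C + ((if Fx D p q (a+1) ≤ τ then (1:ℤ) else 0)
              - (if B + q ≤ τ then 1 else 0)))
        = (A - C) - (if Fx D p q (a+1) ≤ τ then (1:ℤ) else 0)
          + (if τ - q < B ∧ B ≤ τ then (1:ℤ) else 0) + (if B + q ≤ τ then 1 else 0) := by
      intro A B C; ring
    rw [hfin, hIH]
    have hq' : (0:ℤ) < q := by exact_mod_cast hq
    split_ifs <;> omega

end LW2

namespace LW3
open LW LW2

variable (D : Finset (ℕ × ℕ)) (p q K : ℕ)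

lemma rowLen_zero (hD : IsYoung D) {y : ℕ} (h : colLen D 0 ≤ y) :
    rowLen D y = 0 := by
  by_contra hr
  have h0 : (0, y) ∈ D := (mem_iff_row hD _ _).2 (by omega)
  have := (mem_iff_col hD 0 y).1 h0
  omega

lemma colLen0_le (hD : IsYoung D) (hq : 0 < q) (hp : 0 < p)
    (hdiag : ∀ c ∈ D, q * c.1 + p * c.2 + p + q ≤ K * p * q) :
    colLen D 0 ≤ K * q := by
  by_contra h
  have h0 : (0, K * q) ∈ D := (mem_iff_col hD _ _).2 (by omega)
  exact absurd (cell_lt D p q K hq hp hdiag h0).2 (by simp)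

/-- Global balance: west window counts equal north window counts. -/
lemma full (hD : IsYoung D) (hq : 0 < q) (hp : 0 < p)
    (hdiag : ∀ c ∈ D, q * c.1 + p * c.2 + p + q ≤ K * p * q) (τ : ℤ) :
    (∑ x ∈ Finset.range (K * p),
        if τ - q < Fx D p q x ∧ Fx D p q x ≤ τ then (1:ℤ) else 0)
      = ∑ y ∈ Finset.range (K * q),
          if τ < Gy D p q y ∧ Gy D p q y ≤ τ + p then (1:ℤ) else 0 := by
  have hpath := path D p q K hD hq hp hdiag τ (K * p) 0 (by omega)
  have hsplitN : (∑ y ∈ Finset.range (K * q),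
        if τ < Gy D p q y ∧ Gy D p q y ≤ τ + p then (1:ℤ) else 0)
      = (∑ y ∈ Finset.range (colLen D 0),
          if τ < Gy D p q y ∧ Gy D p q y ≤ τ + p then (1:ℤ) else 0)
        + (∑ y ∈ Finset.Ico (colLen D 0) (K * q),
            if τ < Gy D p q y ∧ Gy D p q y ≤ τ + p then (1:ℤ) else 0) := by
    simp only [Finset.range_eq_Ico]
    exact (Finset.sum_Ico_consecutive _ (Nat.zero_le _)
      (colLen0_le D p q K hD hq hp hdiag)).symm
  have htail : (∑ y ∈ Finset.Ico (colLen D 0) (K * q),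
        if τ < Gy D p q y ∧ Gy D p q y ≤ τ + p then (1:ℤ) else 0)
      = (∑ y ∈ Finset.Ico (colLen D 0) (K * q),
          if τ < (0:ℤ) + p * (y + 1) ∧ (0:ℤ) + p * (y + 1) ≤ τ + p then (1:ℤ) else 0) := by
    apply Finset.sum_congr rfl
    intro y hy
    simp only [Finset.mem_Ico] at hy
    rw [Gy, rowLen_zero D hD hy.1]
    push_cast; ring_nf
  rw [htail, AP p (by exact hp) 0 τ (colLen0_le D p q K hD hq hp hdiag)] at hsplitN
  have e1 : (0:ℤ) + p * (colLen D 0) = Fx D p q 0 := by rw [Fx]; push_cast; ring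
  have e2 : (0:ℤ) + (p:ℤ) * (K * q : ℕ) = (K:ℤ) * p * q := by push_cast; ring
  rw [e1, e2] at hsplitN
  simp only [Finset.range_eq_Ico] at hpath hsplitN ⊢
  have hb1 : (if Fx D p q 0 ≤ τ then (1:ℤ) else 0) + (if τ < Fx D p q 0 then (1:ℤ) else 0) = 1 := by
    split_ifs <;> omega
  have hb2 : (if (K:ℤ)*p*q ≤ τ then (1:ℤ) else 0) + (if τ < (K:ℤ)*p*q then (1:ℤ) else 0) = 1 := by
    split_ifs <;> omega
  linarith [hpath, hsplitN]

/-- Claim A at a corner. -/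
lemma claimA (hD : IsYoung D) (hq : 0 < q) (hp : 0 < p)
    (hdiag : ∀ c ∈ D, q * c.1 + p * c.2 + p + q ≤ K * p * q)
    {x₀ y₀ : ℕ} (hmem : (x₀, y₀) ∈ D)
    (hcol : colLen D x₀ = y₀ + 1) (hrow : rowLen D y₀ = x₀ + 1) :
    (∑ x ∈ Finset.Ico (x₀+1) (K * p),
        if (Fx D p q x₀ + q - 1) - q < Fx D p q x ∧ Fx D p q x ≤ (Fx D p q x₀ + q - 1)
        then (1:ℤ) else 0)
      = 1 + ∑ y ∈ Finset.range y₀,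
          if (Fx D p q x₀ + q - 1) < Gy D p q y ∧ Gy D p q y ≤ (Fx D p q x₀ + q - 1) + p
          then (1:ℤ) else 0 := by
  set f₀ := Fx D p q x₀ with hf₀
  set τ := f₀ + q - 1 with hτ
  have hx₀P : x₀ < K * p := (cell_lt D p q K hq hp hdiag hmem).1
  have hpath := path D p q K hD hq hp hdiag τ (K * p - (x₀ + 1)) (x₀ + 1) (by omega)
  have hcc : colLen D (x₀ + 1) ≤ y₀ + 1 := by
    rw [← hcol]; exact colLen_anti D hD (by omega)
  have hstrip : (∑ y ∈ Finset.Ico (colLen D (x₀+1)) (y₀+1),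
        if τ < Gy D p q y ∧ Gy D p q y ≤ τ + p then (1:ℤ) else 0)
      = (∑ y ∈ Finset.Ico (colLen D (x₀+1)) (y₀+1),
          if τ < (q*(x₀+1) : ℤ) + p * (y + 1) ∧ (q*(x₀+1) : ℤ) + p * (y + 1) ≤ τ + p
          then (1:ℤ) else 0) := by
    apply Finset.sum_congr rfl
    intro y hy
    simp only [Finset.mem_Ico] at hy
    rw [Gy, strip_row D hD hy.1 (by omega)]
    push_cast; ring_nf
  have hAP := AP p (by exact hp) ((q*(x₀+1) : ℤ)) τ hcc
  have hsplitN : (∑ y ∈ Finset.range (y₀+1),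
        if τ < Gy D p q y ∧ Gy D p q y ≤ τ + p then (1:ℤ) else 0)
      = (∑ y ∈ Finset.range (colLen D (x₀+1)),
          if τ < Gy D p q y ∧ Gy D p q y ≤ τ + p then (1:ℤ) else 0)
        + (∑ y ∈ Finset.Ico (colLen D (x₀+1)) (y₀+1),
            if τ < Gy D p q y ∧ Gy D p q y ≤ τ + p then (1:ℤ) else 0) := by
    simp only [Finset.range_eq_Ico]
    exact (Finset.sum_Ico_consecutive _ (Nat.zero_le _) hcc).symm
  have hGy₀ : Gy D p q y₀ = f₀ + q := by
    rw [Gy, hrow, hf₀, Fx, hcol]; push_cast; ring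
  have hlast : (∑ y ∈ Finset.range (y₀+1),
        if τ < Gy D p q y ∧ Gy D p q y ≤ τ + p then (1:ℤ) else 0)
      = (∑ y ∈ Finset.range y₀,
          if τ < Gy D p q y ∧ Gy D p q y ≤ τ + p then (1:ℤ) else 0) + 1 := by
    rw [Finset.sum_range_succ, hGy₀]
    have hp' : (1:ℤ) ≤ p := by exact_mod_cast hp
    rw [if_pos ⟨by omega, by omega⟩]
  have he1 : (q*(x₀+1) : ℤ) + p * (colLen D (x₀+1)) = Fx D p q (x₀+1) := by
    rw [Fx]; push_cast; ring
  have he2 : (q*(x₀+1) : ℤ) + p * ((y₀+1 : ℕ) : ℤ) = f₀ + q := by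
    rw [hf₀, Fx, hcol]; push_cast; ring
  have hbound : f₀ + q ≤ (K:ℤ) * p * q := by
    have := hdiag _ hmem
    simp only at this
    rw [hf₀, Fx, hcol]
    push_cast
    push_cast at this
    nlinarith [this]
  have hq' : (1:ℤ) ≤ q := by exact_mod_cast hq
  rw [hstrip, hAP, he1, he2] at hsplitN
  rw [hlast] at hsplitN
  have h1 : (if f₀ + (q:ℤ) ≤ τ then (1:ℤ) else 0) = 0 := by rw [if_neg]; omega
  have h2 : (if τ < (K:ℤ) * p * q then (1:ℤ) else 0) = 1 := by rw [if_pos]; omega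
  have h3 : (if τ < Fx D p q (x₀+1) then (1:ℤ) else 0)
      + (if Fx D p q (x₀+1) ≤ τ then (1:ℤ) else 0) = 1 := by split_ifs <;> omega
  linarith [hpath, hsplitN]

/-- Claim B at a corner. -/
lemma claimB (hD : IsYoung D) (hq : 0 < q) (hp : 0 < p)
    (hdiag : ∀ c ∈ D, q * c.1 + p * c.2 + p + q ≤ K * p * q)
    {x₀ y₀ : ℕ} (hmem : (x₀, y₀) ∈ D)
    (hcol : colLen D x₀ = y₀ + 1) (hrow : rowLen D y₀ = x₀ + 1) :
    (∑ x ∈ Finset.range x₀,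
        if (Fx D p q x₀ - p) - q < Fx D p q x ∧ Fx D p q x ≤ (Fx D p q x₀ - p)
        then (1:ℤ) else 0)
      = ∑ y ∈ Finset.Ico (y₀+1) (K * q),
          if (Fx D p q x₀ - p) < Gy D p q y ∧ Gy D p q y ≤ (Fx D p q x₀ - p) + p
          then (1:ℤ) else 0 := by
  set f₀ := Fx D p q x₀ with hf₀
  set τ := f₀ - p with hτ
  have hx₀P : x₀ < K * p := (cell_lt D p q K hq hp hdiag hmem).1
  have hy₀Q : y₀ < K * q := (cell_lt D p q K hq hp hdiag hmem).2
  have hpath := path D p q K hD hq hp hdiag τ (K * p - x₀) x₀ (by omega)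
  have hfull := full D p q K hD hq hp hdiag τ
  have hbound : f₀ + q ≤ (K:ℤ) * p * q := by
    have := hdiag _ hmem
    simp only at this
    rw [hf₀, Fx, hcol]
    push_cast
    push_cast at this
    nlinarith [this]
  have hq' : (1:ℤ) ≤ q := by exact_mod_cast hq
  have hp' : (1:ℤ) ≤ p := by exact_mod_cast hp
  have h2 : (if τ < (K:ℤ) * p * q then (1:ℤ) else 0) = 1 := by rw [if_pos]; omega
  have h3 : (if τ < f₀ then (1:ℤ) else 0) = 1 := by rw [if_pos]; omega
  rw [hcol] at hpath
  have hsplitX : (∑ x ∈ Finset.range (K * p),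
        if τ - q < Fx D p q x ∧ Fx D p q x ≤ τ then (1:ℤ) else 0)
      = (∑ x ∈ Finset.range x₀,
          if τ - q < Fx D p q x ∧ Fx D p q x ≤ τ then (1:ℤ) else 0)
        + (∑ x ∈ Finset.Ico x₀ (K * p),
            if τ - q < Fx D p q x ∧ Fx D p q x ≤ τ then (1:ℤ) else 0) := by
    simp only [Finset.range_eq_Ico]
    exact (Finset.sum_Ico_consecutive _ (Nat.zero_le _) (by omega)).symm
  have hsplitY : (∑ y ∈ Finset.range (K * q),
        if τ < Gy D p q y ∧ Gy D p q y ≤ τ + p then (1:ℤ) else 0)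
      = (∑ y ∈ Finset.range (y₀+1),
          if τ < Gy D p q y ∧ Gy D p q y ≤ τ + p then (1:ℤ) else 0)
        + (∑ y ∈ Finset.Ico (y₀+1) (K * q),
            if τ < Gy D p q y ∧ Gy D p q y ≤ τ + p then (1:ℤ) else 0) := by
    simp only [Finset.range_eq_Ico]
    exact (Finset.sum_Ico_consecutive _ (Nat.zero_le _) (by omega)).symm
  rw [hsplitX, hsplitY] at hfull
  linarith [hpath, hfull]
end LW3

namespace LW4
open LW LW2 LW3

variable (D : Finset (ℕ × ℕ)) (p q K : ℕ)

/-- Weight of a pair (x,y). -/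
def term (x y : ℕ) : ℤ :=
  (if Gy D p q y ≤ Fx D p q x then 1 else 0)
    + (if (x, y) ∈ D ∧ Fx D p q x < Gy D p q y ∧ Gy D p q y < Fx D p q x + p + q
       then 1 else 0)

/-- Total weight. -/
def AM : ℤ :=
  ∑ x ∈ Finset.range (K * p), ∑ y ∈ Finset.range (K * q), term D p q x y

lemma term_of_mem {x y : ℕ} (h : (x, y) ∈ D) :
    term D p q x y = (if Gy D p q y ≤ Fx D p q x then 1 else 0)
      + (if Fx D p q x < Gy D p q y ∧ Gy D p q y < Fx D p q x + p + q then 1 else 0) := by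
  simp [term, h]

lemma term_of_not_mem {x y : ℕ} (h : (x, y) ∉ D) :
    term D p q x y = (if Gy D p q y ≤ Fx D p q x then 1 else 0) := by
  simp [term, h]

lemma erase_young (hD : IsYoung D) {x₀ y₀ : ℕ}
    (hr : (x₀ + 1, y₀) ∉ D) (hu : (x₀, y₀ + 1) ∉ D) :
    IsYoung (D.erase (x₀, y₀)) := by
  intro x y x' y' hxy hx hy
  rw [Finset.mem_erase] at hxy ⊢
  refine ⟨?_, hD x y x' y' hxy.2 hx hy⟩
  intro heq
  rw [Prod.mk.injEq] at heq
  obtain ⟨h1, h2⟩ := heq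
  rcases Nat.lt_or_ge x₀ x with h | h
  · exact hr (hD x y (x₀+1) y₀ hxy.2 (by omega) (by omega))
  · have : y₀ < y := by
      rcases Nat.lt_or_ge y₀ y with h' | h'
      · exact h'
      · exact absurd (Prod.ext (by omega) (by simp; omega)) hxy.1
    exact hu (hD x y x₀ (y₀+1) hxy.2 (by omega) (by omega))

lemma colLen_erase_ne {x₀ y₀ x : ℕ} (hx : x ≠ x₀) :
    colLen (D.erase (x₀, y₀)) x = colLen D x := by
  rw [colLen, colLen, Finset.filter_erase, Finset.erase_eq_of_notMem]
  simp only [Finset.mem_filter]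
  rintro ⟨-, h⟩
  exact hx h.symm

lemma rowLen_erase_ne {x₀ y₀ y : ℕ} (hy : y ≠ y₀) :
    rowLen (D.erase (x₀, y₀)) y = rowLen D y := by
  rw [rowLen, rowLen, Finset.filter_erase, Finset.erase_eq_of_notMem]
  simp only [Finset.mem_filter]
  rintro ⟨-, h⟩
  exact hy h.symm

lemma colLen_erase_eq {x₀ y₀ : ℕ} (h : (x₀, y₀) ∈ D) :
    colLen (D.erase (x₀, y₀)) x₀ = colLen D x₀ - 1 := by
  rw [colLen, colLen, Finset.filter_erase, Finset.card_erase_of_mem]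
  simp [h]

lemma rowLen_erase_eq {x₀ y₀ : ℕ} (h : (x₀, y₀) ∈ D) :
    rowLen (D.erase (x₀, y₀)) y₀ = rowLen D y₀ - 1 := by
  rw [rowLen, rowLen, Finset.filter_erase, Finset.card_erase_of_mem]
  simp [h]


lemma corner_exists (hD : IsYoung D) (hne : D.Nonempty) :
    ∃ x₀ y₀, (x₀, y₀) ∈ D ∧ (x₀ + 1, y₀) ∉ D ∧ (x₀, y₀ + 1) ∉ D := by
  obtain ⟨c, hc, hmax⟩ := Finset.exists_max_image D (fun c => c.1 + c.2) hne
  refine ⟨c.1, c.2, by simpa using hc, ?_, ?_⟩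
  · intro h; have := hmax _ h; simp only at this; omega
  · intro h; have := hmax _ h; simp only at this; omega

lemma AM_erase (hD : IsYoung D) (hq : 0 < q) (hp : 0 < p)
    (hdiag : ∀ c ∈ D, q * c.1 + p * c.2 + p + q ≤ K * p * q)
    {x₀ y₀ : ℕ} (hmem : (x₀, y₀) ∈ D)
    (hr : (x₀ + 1, y₀) ∉ D) (hu : (x₀, y₀ + 1) ∉ D) :
    AM D p q K = AM (D.erase (x₀, y₀)) p q K := by
  set D' := D.erase (x₀, y₀) with hD'def
  have hD' : IsYoung D' := erase_young D hD hr hu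
  have hp' : (1:ℤ) ≤ p := by exact_mod_cast hp
  have hq' : (1:ℤ) ≤ q := by exact_mod_cast hq
  have hx₀P : x₀ < K * p := (cell_lt D p q K hq hp hdiag hmem).1
  have hy₀Q : y₀ < K * q := (cell_lt D p q K hq hp hdiag hmem).2
  have hcol : colLen D x₀ = y₀ + 1 := by
    have h1 := (mem_iff_col hD x₀ y₀).1 hmem
    have h2 : ¬ (y₀ + 1 < colLen D x₀) := fun hc => hu ((mem_iff_col hD _ _).2 hc)
    omega
  have hrow : rowLen D y₀ = x₀ + 1 := by
    have h1 := (mem_iff_row hD x₀ y₀).1 hmem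
    have h2 : ¬ (x₀ + 1 < rowLen D y₀) := fun hc => hr ((mem_iff_row hD _ _).2 hc)
    omega
  have hcol' : colLen D' x₀ = y₀ := by rw [hD'def, colLen_erase_eq D hmem]; omega
  have hrow' : rowLen D' y₀ = x₀ := by rw [hD'def, rowLen_erase_eq D hmem]; omega
  have hF' : ∀ x, x ≠ x₀ → Fx D' p q x = Fx D p q x := by
    intro x hx; rw [Fx, Fx, hD'def, colLen_erase_ne D hx]
  have hG' : ∀ y, y ≠ y₀ → Gy D' p q y = Gy D p q y := by
    intro y hy; rw [Gy, Gy, hD'def, rowLen_erase_ne D hy]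
  have hFx₀ : Fx D' p q x₀ = Fx D p q x₀ - p := by
    rw [Fx, Fx, hcol', hcol]; push_cast; ring
  have hGy₀ : Gy D p q y₀ = Fx D p q x₀ + q := by
    rw [Gy, hrow, Fx, hcol]; push_cast; ring
  have hGy₀' : Gy D' p q y₀ = Fx D p q x₀ := by
    rw [Gy, hrow', Fx, hcol]; push_cast; ring
  have hmemD_col : ∀ y, ((x₀, y) ∈ D ↔ y < y₀ + 1) := by
    intro y; rw [mem_iff_col hD, hcol]
  have hmemD'_col : ∀ y, ((x₀, y) ∈ D' ↔ y < y₀) := by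
    intro y; rw [mem_iff_col hD', hcol']
  have hmemD_row : ∀ x, ((x, y₀) ∈ D ↔ x < x₀ + 1) := by
    intro x; rw [mem_iff_row hD, hrow]
  have hmemD'_row : ∀ x, ((x, y₀) ∈ D' ↔ x < x₀) := by
    intro x; rw [mem_iff_row hD', hrow']
  have hnotD_gt : ∀ y, y₀ < y → (x₀, y) ∉ D :=
    fun y hy hc => by have := (hmemD_col y).1 hc; omega
  have hnotD'_gt : ∀ y, y₀ < y → (x₀, y) ∉ D' :=
    fun y hy hc => by have := (hmemD'_col y).1 hc; omega
  have hnotD_rgt : ∀ x, x₀ < x → (x, y₀) ∉ D :=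
    fun x hx hc => by have := (hmemD_row x).1 hc; omega
  have hnotD'_rgt : ∀ x, x₀ < x → (x, y₀) ∉ D' :=
    fun x hx hc => by have := (hmemD'_row x).1 hc; omega
  -- pointwise difference lemmas
  have hδy_lt : ∀ y, y < y₀ → term D p q x₀ y - term D' p q x₀ y
      = (if (Fx D p q x₀ + q - 1) < Gy D p q y ∧ Gy D p q y ≤ (Fx D p q x₀ + q - 1) + p
         then (1:ℤ) else 0) := by
    intro y hy
    rw [term_of_mem D p q ((hmemD_col y).2 (by omega)),
        term_of_mem D' p q ((hmemD'_col y).2 hy), hFx₀, hG' y (by omega)]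
    split_ifs <;> omega
  have hδy_gt : ∀ y, y₀ < y → term D p q x₀ y - term D' p q x₀ y
      = (if (Fx D p q x₀ - p) < Gy D p q y ∧ Gy D p q y ≤ (Fx D p q x₀ - p) + p
         then (1:ℤ) else 0) := by
    intro y hy
    rw [term_of_not_mem D p q (hnotD_gt y hy),
        term_of_not_mem D' p q (hnotD'_gt y hy),
        hFx₀, hG' y (by omega)]
    split_ifs <;> omega
  have hδy₀ : term D p q x₀ y₀ - term D' p q x₀ y₀ = 1 := by
    have hnm : (x₀, y₀) ∉ D' := by rw [hD'def]; simp
    rw [term_of_mem D p q hmem, term_of_not_mem D' p q hnm, hFx₀, hGy₀, hGy₀']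
    split_ifs <;> omega
  have hδx_lt : ∀ x, x < x₀ → term D p q x y₀ - term D' p q x y₀
      = -(if (Fx D p q x₀ - p) - q < Fx D p q x ∧ Fx D p q x ≤ (Fx D p q x₀ - p)
          then (1:ℤ) else 0) := by
    intro x hx
    rw [term_of_mem D p q ((hmemD_row x).2 (by omega)),
        term_of_mem D' p q ((hmemD'_row x).2 hx), hF' x (by omega), hGy₀, hGy₀']
    split_ifs <;> omega
  have hδx_gt : ∀ x, x₀ < x → term D p q x y₀ - term D' p q x y₀
      = -(if (Fx D p q x₀ + q - 1) - q < Fx D p q x ∧ Fx D p q x ≤ (Fx D p q x₀ + q - 1)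
          then (1:ℤ) else 0) := by
    intro x hx
    rw [term_of_not_mem D p q (hnotD_rgt x hx),
        term_of_not_mem D' p q (hnotD'_rgt x hx),
        hF' x (by omega), hGy₀, hGy₀']
    split_ifs <;> omega
  have hδzero : ∀ x y, x ≠ x₀ → y ≠ y₀ → term D p q x y - term D' p q x y = 0 := by
    intro x y hx hy
    have hne : (x, y) ≠ (x₀, y₀) := by simp [Prod.ext_iff]; intro h; exact absurd h hx
    have hmm : ((x, y) ∈ D') ↔ ((x, y) ∈ D) := by
      rw [hD'def, Finset.mem_erase]; exact ⟨fun h => h.2, fun h => ⟨hne, h⟩⟩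
    by_cases hm : (x, y) ∈ D
    · rw [term_of_mem D p q hm, term_of_mem D' p q (hmm.2 hm), hF' x hx, hG' y hy]; ring
    · rw [term_of_not_mem D p q hm, term_of_not_mem D' p q (fun hc => hm (hmm.1 hc)),
          hF' x hx, hG' y hy]; ring
  -- assemble
  have hAMdiff : AM D p q K - AM D' p q K
      = ∑ x ∈ Finset.range (K*p), ∑ y ∈ Finset.range (K*q),
          (term D p q x y - term D' p q x y) := by
    rw [AM, AM, ← Finset.sum_sub_distrib]
    exact Finset.sum_congr rfl fun x _ => (Finset.sum_sub_distrib _ _).symm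
  have hinner : ∀ x ∈ (Finset.range (K*p)).erase x₀,
      (∑ y ∈ Finset.range (K*q), (term D p q x y - term D' p q x y))
        = term D p q x y₀ - term D' p q x y₀ := by
    intro x hx
    rw [Finset.mem_erase] at hx
    apply Finset.sum_eq_single_of_mem y₀ (Finset.mem_range.2 hy₀Q)
    intro y _ hyne
    exact hδzero x y hx.1 hyne
  have hysum : (∑ y ∈ Finset.range (K*q), (term D p q x₀ y - term D' p q x₀ y))
      = (∑ y ∈ Finset.range y₀,
          if (Fx D p q x₀ + q - 1) < Gy D p q y ∧ Gy D p q y ≤ (Fx D p q x₀ + q - 1) + p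
          then (1:ℤ) else 0)
        + 1
        + (∑ y ∈ Finset.Ico (y₀+1) (K*q),
            if (Fx D p q x₀ - p) < Gy D p q y ∧ Gy D p q y ≤ (Fx D p q x₀ - p) + p
            then (1:ℤ) else 0) := by
    rw [Finset.range_eq_Ico,
        ← Finset.sum_Ico_consecutive _ (Nat.zero_le (y₀+1)) (by omega : y₀+1 ≤ K*q),
        Finset.sum_Ico_succ_top (Nat.zero_le y₀), ← Finset.range_eq_Ico, hδy₀]
    congr 1
    congr 1
    · exact Finset.sum_congr rfl fun y hy => hδy_lt y (Finset.mem_range.1 hy)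
    · exact Finset.sum_congr rfl fun y hy => hδy_gt y (Finset.mem_Ico.1 hy).1
  have hxsum : (∑ x ∈ (Finset.range (K*p)).erase x₀, (term D p q x y₀ - term D' p q x y₀))
      = -(∑ x ∈ Finset.range x₀,
          if (Fx D p q x₀ - p) - q < Fx D p q x ∧ Fx D p q x ≤ (Fx D p q x₀ - p)
          then (1:ℤ) else 0)
        - (∑ x ∈ Finset.Ico (x₀+1) (K*p),
            if (Fx D p q x₀ + q - 1) - q < Fx D p q x ∧ Fx D p q x ≤ (Fx D p q x₀ + q - 1)
            then (1:ℤ) else 0) := by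
    rw [Finset.sum_erase_eq_sub (Finset.mem_range.2 hx₀P)]
    rw [Finset.range_eq_Ico,
        ← Finset.sum_Ico_consecutive _ (Nat.zero_le (x₀+1)) (by omega : x₀+1 ≤ K*p),
        Finset.sum_Ico_succ_top (Nat.zero_le x₀), ← Finset.range_eq_Ico, hδy₀]
    have e1 : (∑ x ∈ Finset.range x₀, (term D p q x y₀ - term D' p q x y₀))
        = -(∑ x ∈ Finset.range x₀,
            if (Fx D p q x₀ - p) - q < Fx D p q x ∧ Fx D p q x ≤ (Fx D p q x₀ - p)
            then (1:ℤ) else 0) := by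
      rw [← Finset.sum_neg_distrib]
      exact Finset.sum_congr rfl fun x hx => hδx_lt x (Finset.mem_range.1 hx)
    have e2 : (∑ x ∈ Finset.Ico (x₀+1) (K*p), (term D p q x y₀ - term D' p q x y₀))
        = -(∑ x ∈ Finset.Ico (x₀+1) (K*p),
            if (Fx D p q x₀ + q - 1) - q < Fx D p q x ∧ Fx D p q x ≤ (Fx D p q x₀ + q - 1)
            then (1:ℤ) else 0) := by
      rw [← Finset.sum_neg_distrib]
      exact Finset.sum_congr rfl fun x hx => hδx_gt x (Finset.mem_Ico.1 hx).1
    rw [e1, e2]; ring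
  have hA := claimA D p q K hD hq hp hdiag hmem hcol hrow
  have hB := claimB D p q K hD hq hp hdiag hmem hcol hrow
  have : AM D p q K - AM D' p q K = 0 := by
    rw [hAMdiff, ← Finset.add_sum_erase _ _ (Finset.mem_range.2 hx₀P),
        Finset.sum_congr rfl hinner, hysum, hxsum]
    linarith [hA, hB]
  linarith [this]


lemma AM_eq_empty (hq : 0 < q) (hp : 0 < p) :
    ∀ n (D : Finset (ℕ × ℕ)), D.card = n → IsYoung D →
      (∀ c ∈ D, q * c.1 + p * c.2 + p + q ≤ K * p * q) →
      AM D p q K = AM ∅ p q K := by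
  intro n
  induction n with
  | zero =>
    intro D hcard hD hdiag
    rw [Finset.card_eq_zero.1 hcard]
  | succ n ih =>
    intro D hcard hD hdiag
    have hne : D.Nonempty := by rw [← Finset.card_pos]; omega
    obtain ⟨x₀, y₀, hmem, hr, hu⟩ := corner_exists D hD hne
    rw [AM_erase D p q K hD hq hp hdiag hmem hr hu]
    exact ih (D.erase (x₀, y₀))
      (by rw [Finset.card_erase_of_mem hmem]; omega)
      (erase_young D hD hr hu)
      (fun c hc => hdiag c (Finset.mem_erase.1 hc).2)

lemma AM_empty (hq : 0 < q) (hp : 0 < p) :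
    AM (∅ : Finset (ℕ × ℕ)) p q K
      = ((((Finset.range (K * p)) ×ˢ (Finset.range (K * q))).filter
            fun c => q * c.1 + p * c.2 + p + q ≤ K * p * q).card : ℤ) := by
  have hcol : ∀ x, colLen (∅ : Finset (ℕ × ℕ)) x = 0 := by intro x; simp [colLen]
  have hrow : ∀ y, rowLen (∅ : Finset (ℕ × ℕ)) y = 0 := by intro y; simp [rowLen]
  have hterm : ∀ x y, term (∅ : Finset (ℕ × ℕ)) p q x y
      = if p * (y + 1) ≤ q * x then (1:ℤ) else 0 := by
    intro x y
    rw [term_of_not_mem _ p q (by simp)]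
    have hiff : Gy (∅ : Finset (ℕ × ℕ)) p q y ≤ Fx ∅ p q x ↔ p * (y + 1) ≤ q * x := by
      rw [Gy, Fx, hcol, hrow]
      push_cast
      simp only [mul_zero, add_zero, zero_add]
      exact_mod_cast Iff.rfl
    rw [if_congr hiff rfl rfl]
  have h1 : AM (∅ : Finset (ℕ × ℕ)) p q K
      = ((((Finset.range (K * p)) ×ˢ (Finset.range (K * q))).filter
            fun c => p * (c.2 + 1) ≤ q * c.1).card : ℤ) := by
    rw [AM, Finset.card_filter]
    push_cast
    rw [Finset.sum_product]
    apply Finset.sum_congr rfl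
    intro x _
    apply Finset.sum_congr rfl
    intro y _
    rw [hterm]
  rw [h1]
  congr 1
  -- card equality via complement reflection
  have key : ((((Finset.range (K * p)) ×ˢ (Finset.range (K * q))).filter
        fun c => ¬ (p * (c.2 + 1) ≤ q * c.1)).card)
      = ((((Finset.range (K * p)) ×ˢ (Finset.range (K * q))).filter
          fun c => ¬ (q * c.1 + p * c.2 + p + q ≤ K * p * q)).card) := by
    apply Finset.card_bij (fun c _ => (K * p - 1 - c.1, c.2))
    · rintro ⟨x, y⟩ hc
      simp only [Finset.mem_filter, Finset.mem_product, Finset.mem_range, not_le] at hc ⊢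
      obtain ⟨⟨hx, hy⟩, hlt⟩ := hc
      refine ⟨⟨by omega, hy⟩, ?_⟩
      have hxle : x ≤ K * p - 1 := by omega
      zify [hxle, show (1:ℕ) ≤ K * p from by omega]
      push_cast
      nlinarith [hlt, hx, hy]
    · rintro ⟨x, y⟩ hc ⟨x', y'⟩ hc' heq
      simp only [Finset.mem_filter, Finset.mem_product, Finset.mem_range] at hc hc'
      rw [Prod.mk.injEq] at heq ⊢
      have h1 := heq.1
      have hx := hc.1.1
      have hx' := hc'.1.1
      exact ⟨by omega, heq.2⟩
    · rintro ⟨x, y⟩ hc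
      simp only [Finset.mem_filter, Finset.mem_product, Finset.mem_range, not_le] at hc
      obtain ⟨⟨hx, hy⟩, hlt⟩ := hc
      refine ⟨(K * p - 1 - x, y), ?_, ?_⟩
      · simp only [Finset.mem_filter, Finset.mem_product, Finset.mem_range, not_le]
        refine ⟨⟨by omega, hy⟩, ?_⟩
        have hxle : x ≤ K * p - 1 := by omega
        zify [show K * p - 1 - x ≤ K * p - 1 from by omega, show (1:ℕ) ≤ K * p from by omega,
          hxle]
        push_cast
        nlinarith [hlt, hx, hy]
      · simp only [Prod.mk.injEq]
        refine ⟨by omega, by simp⟩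
  have t1 := Finset.card_filter_add_card_filter_not
    (s := (Finset.range (K * p)) ×ˢ (Finset.range (K * q)))
    (p := fun c => p * (c.2 + 1) ≤ q * c.1)
  have t2 := Finset.card_filter_add_card_filter_not
    (s := (Finset.range (K * p)) ×ˢ (Finset.range (K * q)))
    (p := fun c => q * c.1 + p * c.2 + p + q ≤ K * p * q)
  omega


lemma arm_eq {D : Finset (ℕ × ℕ)} (hD : IsYoung D) {x y : ℕ} (hc : (x, y) ∈ D) :
    rowLen D y = x + arm D (x, y) + 1 := by
  have hfilter : (D.filter fun d => d.2 = (x,y).2 ∧ (x,y).1 < d.1)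
      = (Finset.Ico (x+1) (rowLen D y)).image (fun x' => (x', y)) := by
    ext ⟨a, b⟩
    simp only [Finset.mem_filter, Finset.mem_image, Finset.mem_Ico, Prod.mk.injEq]
    constructor
    · rintro ⟨hab, hb, hxa⟩
      subst hb
      exact ⟨a, ⟨by omega, (mem_iff_row hD a b).1 hab⟩, rfl, rfl⟩
    · rintro ⟨x', ⟨h1, h2⟩, rfl, rfl⟩
      exact ⟨(mem_iff_row hD x' y).2 h2, rfl, by omega⟩
  have harm : arm D (x, y) = rowLen D y - (x+1) := by
    rw [arm, hfilter, Finset.card_image_of_injective _ (fun a b hab => by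
      simpa using congrArg Prod.fst hab), Nat.card_Ico]
  have hlt : x < rowLen D y := (mem_iff_row hD x y).1 hc
  omega

lemma leg_eq {D : Finset (ℕ × ℕ)} (hD : IsYoung D) {x y : ℕ} (hc : (x, y) ∈ D) :
    colLen D x = y + leg D (x, y) + 1 := by
  have hfilter : (D.filter fun d => d.1 = (x,y).1 ∧ (x,y).2 < d.2)
      = (Finset.Ico (y+1) (colLen D x)).image (fun y' => (x, y')) := by
    ext ⟨a, b⟩
    simp only [Finset.mem_filter, Finset.mem_image, Finset.mem_Ico, Prod.mk.injEq]
    constructor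
    · rintro ⟨hab, ha, hyb⟩
      subst ha
      exact ⟨b, ⟨by omega, (mem_iff_col hD a b).1 hab⟩, rfl, rfl⟩
    · rintro ⟨y', ⟨h1, h2⟩, rfl, rfl⟩
      exact ⟨(mem_iff_col hD x y').2 h2, rfl, by omega⟩
  have hleg : leg D (x, y) = colLen D x - (y+1) := by
    rw [leg, hfilter, Finset.card_image_of_injective _ (fun a b hab => by
      simpa using congrArg Prod.snd hab), Nat.card_Ico]
  have hlt : y < colLen D x := (mem_iff_col hD x y).1 hc
  omega

/-- The mid count equals the membership part of AM. -/
lemma mid_eq (hD : IsYoung D) (hq : 0 < q) (hp : 0 < p)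
    (hdiag : ∀ c ∈ D, q * c.1 + p * c.2 + p + q ≤ K * p * q) :
    ((D.filter fun c =>
        p * leg D c < q * (arm D c + 1) ∧ q * arm D c < p * (leg D c + 1)).card : ℤ)
      = ∑ x ∈ Finset.range (K * p), ∑ y ∈ Finset.range (K * q),
          (if (x, y) ∈ D ∧ Fx D p q x < Gy D p q y ∧ Gy D p q y < Fx D p q x + p + q
           then (1:ℤ) else 0) := by
  have hsub : ∀ c ∈ D, c ∈ (Finset.range (K * p)) ×ˢ (Finset.range (K * q)) := by
    intro c hc
    have := cell_lt D p q K hq hp hdiag hc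
    simp only [Finset.mem_product, Finset.mem_range]
    exact this
  rw [← Finset.sum_product']
  have hcard : (∑ c ∈ (Finset.range (K * p)) ×ˢ (Finset.range (K * q)),
      (if (c.1, c.2) ∈ D ∧ Fx D p q c.1 < Gy D p q c.2 ∧ Gy D p q c.2 < Fx D p q c.1 + p + q
       then (1:ℤ) else 0))
      = (((Finset.range (K * p)) ×ˢ (Finset.range (K * q))).filter
          (fun c => (c.1, c.2) ∈ D ∧ Fx D p q c.1 < Gy D p q c.2
            ∧ Gy D p q c.2 < Fx D p q c.1 + p + q)).card := by
    rw [Finset.card_filter]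
    push_cast
    rfl
  have hfeq : (((Finset.range (K * p)) ×ˢ (Finset.range (K * q))).filter
        (fun c => (c.1, c.2) ∈ D ∧ Fx D p q c.1 < Gy D p q c.2
          ∧ Gy D p q c.2 < Fx D p q c.1 + p + q))
      = D.filter (fun c =>
          p * leg D c < q * (arm D c + 1) ∧ q * arm D c < p * (leg D c + 1)) := by
    ext ⟨x, y⟩
    simp only [Finset.mem_filter, Finset.mem_product, Finset.mem_range]
    constructor
    · rintro ⟨-, hm, h1, h2⟩
      refine ⟨hm, ?_⟩
      have ha := arm_eq hD hm
      have hl := leg_eq hD hm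
      have hF : Fx D p q x = (q:ℤ)*x + p*y + p*(leg D (x,y)) + p := by
        rw [Fx, hl]; push_cast; ring
      have hG : Gy D p q y = (q:ℤ)*x + q*(arm D (x,y)) + q + p*y + p := by
        rw [Gy, ha]; push_cast; ring
      rw [hF, hG] at h1 h2
      constructor
      · zify; nlinarith [h1]
      · zify; nlinarith [h2]
    · rintro ⟨hm, h1, h2⟩
      have hmem' := hsub _ hm
      simp only [Finset.mem_product, Finset.mem_range] at hmem'
      refine ⟨hmem', hm, ?_, ?_⟩
      · have ha := arm_eq hD hm
        have hl := leg_eq hD hm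
        have hF : Fx D p q x = (q:ℤ)*x + p*y + p*(leg D (x,y)) + p := by
          rw [Fx, hl]; push_cast; ring
        have hG : Gy D p q y = (q:ℤ)*x + q*(arm D (x,y)) + q + p*y + p := by
          rw [Gy, ha]; push_cast; ring
        rw [hF, hG]
        zify at h1
        nlinarith [h1]
      · have ha := arm_eq hD hm
        have hl := leg_eq hD hm
        have hF : Fx D p q x = (q:ℤ)*x + p*y + p*(leg D (x,y)) + p := by
          rw [Fx, hl]; push_cast; ring
        have hG : Gy D p q y = (q:ℤ)*x + q*(arm D (x,y)) + q + p*y + p := by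
          rw [Gy, ha]; push_cast; ring
        rw [hF, hG]
        zify at h2
        nlinarith [h2]
  rw [hcard, hfeq]


lemma label_sum :
    (∑ v ∈ labels D p q (K*p) (K*q), ∑ w ∈ labels D p q (K*p) (K*q),
        (if v ≤ w then (Win D p q (K*p) v : ℤ) * (Nin D p q (K*p) (K*q) w : ℤ) else 0))
      = ∑ x ∈ Finset.range (K*p), ∑ y ∈ Finset.range (K*q),
          (if Gy D p q y ≤ Fx D p q x then (1:ℤ) else 0) := by
  have hwl : ∀ x : ℕ, wlabel D p q (K*p) x = (K:ℤ)*p*q - Fx D p q x := by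
    intro x; rw [wlabel, Fx]; push_cast; ring
  have hnl : ∀ y : ℕ, nlabel D p q (K*p) y = (K:ℤ)*p*q - Gy D p q y := by
    intro y; rw [nlabel, Gy]; push_cast; ring
  have hWin : ∀ v, ((Win D p q (K*p) v : ℤ))
      = ∑ x ∈ Finset.range (K*p), (if wlabel D p q (K*p) x = v then (1:ℤ) else 0) := by
    intro v; rw [Win, Finset.card_filter]; push_cast; rfl
  have hNin : ∀ w, ((Nin D p q (K*p) (K*q) w : ℤ))
      = ∑ y ∈ Finset.range (K*q), (if nlabel D p q (K*p) y = w then (1:ℤ) else 0) := by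
    intro w; rw [Nin, Finset.card_filter]; push_cast; rfl
  have hstep1 : ∀ v w : ℤ,
      (if v ≤ w then (Win D p q (K*p) v : ℤ) * (Nin D p q (K*p) (K*q) w : ℤ) else 0)
        = ∑ x ∈ Finset.range (K*p), ∑ y ∈ Finset.range (K*q),
            (if v ≤ w
             then (if wlabel D p q (K*p) x = v then (1:ℤ) else 0)
                * (if nlabel D p q (K*p) y = w then (1:ℤ) else 0)
             else 0) := by
    intro v w
    by_cases hvw : v ≤ w
    · simp only [if_pos hvw]
      rw [hWin, hNin, Finset.sum_mul_sum]
    · simp only [if_neg hvw]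
      symm
      simp
  rw [Finset.sum_congr rfl (fun v _ => Finset.sum_congr rfl (fun w _ => hstep1 v w))]
  -- swap sums
  set L := labels D p q (K*p) (K*q) with hL
  set f : ℤ → ℤ → ℕ → ℕ → ℤ := fun v w x y =>
    (if v ≤ w
     then (if wlabel D p q (K*p) x = v then (1:ℤ) else 0)
        * (if nlabel D p q (K*p) y = w then (1:ℤ) else 0)
     else 0) with hf
  have hswap : (∑ v ∈ L, ∑ w ∈ L, ∑ x ∈ Finset.range (K*p), ∑ y ∈ Finset.range (K*q), f v w x y)
      = ∑ x ∈ Finset.range (K*p), ∑ y ∈ Finset.range (K*q), ∑ v ∈ L, ∑ w ∈ L, f v w x y :=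
    calc ∑ v ∈ L, ∑ w ∈ L, ∑ x ∈ Finset.range (K*p), ∑ y ∈ Finset.range (K*q), f v w x y
        = ∑ v ∈ L, ∑ x ∈ Finset.range (K*p), ∑ w ∈ L, ∑ y ∈ Finset.range (K*q), f v w x y :=
          Finset.sum_congr rfl (fun v _ => Finset.sum_comm)
      _ = ∑ x ∈ Finset.range (K*p), ∑ v ∈ L, ∑ w ∈ L, ∑ y ∈ Finset.range (K*q), f v w x y :=
          Finset.sum_comm
      _ = ∑ x ∈ Finset.range (K*p), ∑ v ∈ L, ∑ y ∈ Finset.range (K*q), ∑ w ∈ L, f v w x y :=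
          Finset.sum_congr rfl (fun x _ => Finset.sum_congr rfl (fun v _ => Finset.sum_comm))
      _ = ∑ x ∈ Finset.range (K*p), ∑ y ∈ Finset.range (K*q), ∑ v ∈ L, ∑ w ∈ L, f v w x y :=
          Finset.sum_congr rfl (fun x _ => Finset.sum_comm)
  rw [hswap]
  apply Finset.sum_congr rfl
  intro x hx
  apply Finset.sum_congr rfl
  intro y hy
  have hvmem : wlabel D p q (K*p) x ∈ L :=
    Finset.mem_union_left _ (Finset.mem_image_of_mem _ hx)
  have hwmem : nlabel D p q (K*p) y ∈ L :=
    Finset.mem_union_right _ (Finset.mem_image_of_mem _ hy)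
  have hone : (∑ v ∈ L, ∑ w ∈ L, f v w x y)
      = (if wlabel D p q (K*p) x ≤ nlabel D p q (K*p) y then (1:ℤ) else 0) := by
    rw [Finset.sum_eq_single_of_mem (wlabel D p q (K*p) x) hvmem ?_]
    · rw [Finset.sum_eq_single_of_mem (nlabel D p q (K*p) y) hwmem ?_]
      · simp [hf]
      · intro w hw hwne
        simp only [hf]
        rw [if_neg (show ¬ (nlabel D p q (K*p) y = w) from fun h => hwne h.symm)]
        simp
    · intro v hv hvne
      apply Finset.sum_eq_zero
      intro w hw
      simp only [hf]
      rw [if_neg (show ¬ (wlabel D p q (K*p) x = v) from fun h => hvne h.symm)]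
      simp
  rw [hone]
  have hiff : (wlabel D p q (K*p) x ≤ nlabel D p q (K*p) y) ↔ (Gy D p q y ≤ Fx D p q x) := by
    rw [hwl, hnl]
    omega
  rw [if_congr hiff rfl rfl]

end LW4

theorem LW_mid_formula (D : Finset (ℕ × ℕ)) (hD : IsYoung D)
    (p q K : ℕ) (hp : 0 < p) (hq : 0 < q) (hK : 0 < K) (hpq : Nat.Coprime p q)
    (hdiag : ∀ c ∈ D, q * c.1 + p * c.2 + p + q ≤ K * p * q) :
    ((D.filter fun c =>
        p * leg D c < q * (arm D c + 1) ∧ q * arm D c < p * (leg D c + 1)).card : ℤ)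
      = ((((Finset.range (K * p)) ×ˢ (Finset.range (K * q))).filter
            fun c => q * c.1 + p * c.2 + p + q ≤ K * p * q).card : ℤ)
        - ∑ v ∈ labels D p q (K * p) (K * q), ∑ w ∈ labels D p q (K * p) (K * q),
            (if v ≤ w then (Win D p q (K * p) v : ℤ) * (Nin D p q (K * p) (K * q) w : ℤ)
             else 0) := by
  have hsplit : LW4.AM D p q K
      = (∑ x ∈ Finset.range (K*p), ∑ y ∈ Finset.range (K*q),
          (if LW2.Gy D p q y ≤ LW2.Fx D p q x then (1:ℤ) else 0))
        + (∑ x ∈ Finset.range (K*p), ∑ y ∈ Finset.range (K*q),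
            (if (x,y) ∈ D ∧ LW2.Fx D p q x < LW2.Gy D p q y
                ∧ LW2.Gy D p q y < LW2.Fx D p q x + p + q then (1:ℤ) else 0)) := by
    rw [LW4.AM, ← Finset.sum_add_distrib]
    apply Finset.sum_congr rfl
    intro x _
    rw [← Finset.sum_add_distrib]
    rfl
  have h1 := LW4.mid_eq D p q K hD hq hp hdiag
  have h2 := LW4.label_sum D p q K
  have h3 := LW4.AM_eq_empty p q K hq hp D.card D rfl hD hdiag
  have h4 := LW4.AM_empty p q K hq hp
  rw [h1, h2]
  linarith [hsplit, h3, h4]
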